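/- Every normed A-bimodule X over a C*-algebra A contains a largest aperiodic A-subbimodule, namely the closed linear span of all aperiodic A-subbimodules of X. -/

import Mathlib

open scoped ComplexOrder ComplexInnerProductSpace
open Filter Topology

noncomputable section

section Hereditary

variable {A : Type*} [NonUnitalNormedRing A] [StarRing A] [Module ℂ A] [PartialOrder A]

/-- A hereditary subalgebra of a C*-algebra. -/
def IsHereditary (D : NonUnitalStarSubalgebra ℂ A) : Prop :=
  ∀ a d : A, d ∈ D → 0 ≤ a → a ≤ d → a ∈ D

/-- A non-zero, closed, hereditary C*-subalgebra. -/
def NontrivClosedHereditary (D : NonUnitalStarSubalgebra ℂ A) : Prop :=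
  IsClosed (D : Set A) ∧ (∃ d ∈ D, d ≠ 0) ∧ IsHereditary D

end Hereditary

section Bim

variable (A X : Type*) [NormedRing A] [NormedAlgebra ℂ A]
  [NormedAddCommGroup X] [NormedSpace ℂ X]

/-- A normed `A`-bimodule structure on the normed space `X`. -/
structure NormedBimoduleStr where
  lsmul : A → X → X
  rsmul : X → A → X
  lsmul_add : ∀ a x y, lsmul a (x + y) = lsmul a x + lsmul a y
  add_lsmul : ∀ a b x, lsmul (a + b) x = lsmul a x + lsmul b x
  lsmul_smulc : ∀ (c : ℂ) a x, lsmul a (c • x) = c • lsmul a x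
  rsmul_add : ∀ x y a, rsmul (x + y) a = rsmul x a + rsmul y a
  add_rsmul : ∀ x a b, rsmul x (a + b) = rsmul x a + rsmul x b
  rsmul_smulc : ∀ (c : ℂ) x a, rsmul (c • x) a = c • rsmul x a
  lsmul_mul : ∀ a b x, lsmul (a * b) x = lsmul a (lsmul b x)
  rsmul_mul : ∀ x a b, rsmul x (a * b) = rsmul (rsmul x a) b
  lsmul_rsmul : ∀ a x b, rsmul (lsmul a x) b = lsmul a (rsmul x b)
  norm_lsmul_le : ∀ a x, ‖lsmul a x‖ ≤ ‖a‖ * ‖x‖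
  norm_rsmul_le : ∀ x a, ‖rsmul x a‖ ≤ ‖x‖ * ‖a‖

variable {A X} [StarRing A] [PartialOrder A]

/-- Kishimoto's condition for an element of a normed `A`-bimodule. -/
def KishimotoBim (M : NormedBimoduleStr A X) (x : X) : Prop :=
  ∀ D : NonUnitalStarSubalgebra ℂ A, NontrivClosedHereditary D →
    ∀ ε : ℝ, 0 < ε → ∃ a ∈ D, 0 ≤ a ∧ ‖a‖ = 1 ∧ ‖M.lsmul a (M.rsmul x a)‖ < ε

/-- Aperiodicity of a normed `A`-bimodule. -/
def AperiodicBim (M : NormedBimoduleStr A X) : Prop := ∀ x : X, KishimotoBim M x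

/-- An `A`-subbimodule of a normed `A`-bimodule. -/
def IsSubBimoduleX (M : NormedBimoduleStr A X) (S : Submodule ℂ X) : Prop :=
  ∀ (a : A), ∀ x ∈ S, M.lsmul a x ∈ S ∧ M.rsmul x a ∈ S

end Bim

section Aux

variable {A X : Type*} [NormedRing A] [NormedAlgebra ℂ A]
  [NormedAddCommGroup X] [NormedSpace ℂ X]

/-- Left multiplication as a continuous linear map. -/
def NormedBimoduleStr.lsmulCLM (M : NormedBimoduleStr A X) (a : A) : X →L[ℂ] X :=
  LinearMap.mkContinuous
    { toFun := M.lsmul a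
      map_add' := M.lsmul_add a
      map_smul' := fun c x => M.lsmul_smulc c a x } ‖a‖ (M.norm_lsmul_le a)

/-- Right multiplication as a continuous linear map. -/
def NormedBimoduleStr.rsmulCLM (M : NormedBimoduleStr A X) (a : A) : X →L[ℂ] X :=
  LinearMap.mkContinuous
    { toFun := fun x => M.rsmul x a
      map_add' := fun x y => M.rsmul_add x y a
      map_smul' := fun c x => M.rsmul_smulc c x a } ‖a‖
    (fun x => (M.norm_rsmul_le x a).trans_eq (mul_comm _ _))

@[simp] lemma NormedBimoduleStr.lsmulCLM_apply (M : NormedBimoduleStr A X) (a : A) (x : X) :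
    M.lsmulCLM a x = M.lsmul a x := rfl

@[simp] lemma NormedBimoduleStr.rsmulCLM_apply (M : NormedBimoduleStr A X) (a : A) (x : X) :
    M.rsmulCLM a x = M.rsmul x a := rfl

variable [StarRing A] [PartialOrder A]

/-- The sandwich `a x a`. -/
def NormedBimoduleStr.san (M : NormedBimoduleStr A X) (a : A) (x : X) : X :=
  M.lsmul a (M.rsmul x a)

lemma NormedBimoduleStr.norm_san_le (M : NormedBimoduleStr A X) (a : A) (x : X) :
    ‖M.san a x‖ ≤ ‖a‖ * ‖x‖ * ‖a‖ := by
  calc ‖M.lsmul a (M.rsmul x a)‖ ≤ ‖a‖ * ‖M.rsmul x a‖ := M.norm_lsmul_le _ _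
    _ ≤ ‖a‖ * (‖x‖ * ‖a‖) :=
      mul_le_mul_of_nonneg_left (M.norm_rsmul_le x a) (norm_nonneg a)
    _ = ‖a‖ * ‖x‖ * ‖a‖ := (mul_assoc _ _ _).symm

lemma NormedBimoduleStr.san_add (M : NormedBimoduleStr A X) (a : A) (x y : X) :
    M.san a (x + y) = M.san a x + M.san a y := by
  unfold NormedBimoduleStr.san
  rw [M.rsmul_add, M.lsmul_add]

lemma NormedBimoduleStr.san_smul (M : NormedBimoduleStr A X) (a : A) (c : ℂ) (x : X) :
    M.san a (c • x) = c • M.san a x := by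
  unfold NormedBimoduleStr.san
  rw [M.rsmul_smulc, M.lsmul_smulc]

lemma NormedBimoduleStr.san_sub (M : NormedBimoduleStr A X) (a : A) (x y : X) :
    M.san a (x - y) = M.san a x - M.san a y := by
  have h := M.san_add a (x - y) y
  rw [sub_add_cancel] at h
  rw [eq_sub_iff_add_eq, ← h]

/-- The key factorization: if `b = p * b` and `b = b * p`, then
`b x b = b (p x p) b`. -/
lemma NormedBimoduleStr.san_san (M : NormedBimoduleStr A X) {b p : A}
    (h₁ : p * b = b) (h₂ : b * p = b) (x : X) :
    M.san b x = M.san b (M.san p x) := by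
  unfold NormedBimoduleStr.san
  conv_rhs => rw [M.lsmul_rsmul, ← M.rsmul_mul, h₁, ← M.lsmul_mul, h₂]

lemma NormedBimoduleStr.san_factor (M : NormedBimoduleStr A X) {u a : A}
    (h : u * a = a * u) (x : X) :
    M.san (u * a) x = M.lsmul u (M.rsmul (M.san a x) u) := by
  unfold NormedBimoduleStr.san
  conv_rhs => rw [M.lsmul_rsmul, ← M.lsmul_mul, ← M.rsmul_mul, ← h]

end Aux


section Bump

/-- The bump function: `0` below `1/4`, `1` above `1/2`. -/
private def bumpF (t : ℝ) : ℝ := min 1 (max (4 * t - 1) 0)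

/-- The quotient function `bumpF t / t`. -/
private def bumpJ (t : ℝ) : ℝ := bumpF t / t

private lemma bumpF_cont : Continuous bumpF := by
  unfold bumpF; fun_prop

private lemma bumpF_nonneg (t : ℝ) : 0 ≤ bumpF t :=
  le_min (by norm_num) (le_max_right _ _)

private lemma bumpF_le_one (t : ℝ) : bumpF t ≤ 1 := min_le_left _ _

private lemma bumpF_eq_zero {t : ℝ} (ht : t ≤ 1/4) : bumpF t = 0 := by
  unfold bumpF
  rw [max_eq_right (by linarith), min_eq_right (by norm_num)]

private lemma bumpF_eq_one {t : ℝ} (ht : 1/2 ≤ t) : bumpF t = 1 := by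
  unfold bumpF
  rw [min_eq_left]
  exact le_max_of_le_left (by linarith)

private lemma bumpJ_eq_zero {t : ℝ} (ht : t ≤ 1/4) : bumpJ t = 0 := by
  unfold bumpJ
  rw [bumpF_eq_zero ht, zero_div]

private lemma bumpJ_cont : Continuous bumpJ := by
  rw [continuous_iff_continuousAt]
  intro t₀
  rcases lt_or_ge t₀ (1/4) with h | h
  · have hev : ∀ᶠ t in 𝓝 t₀, bumpJ t = (0 : ℝ) :=
      eventually_of_mem (Iio_mem_nhds h) (fun t ht => bumpJ_eq_zero (le_of_lt ht))
    exact ContinuousAt.congr continuousAt_const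
      (Filter.eventuallyEq_of_mem (Iio_mem_nhds h) fun t ht => (bumpJ_eq_zero ht.le).symm)
  · have ht₀ : t₀ ≠ 0 := by intro h0; rw [h0] at h; norm_num at h
    exact (bumpF_cont.continuousAt).div continuousAt_id ht₀

private lemma bumpJ_bound (t : ℝ) : |bumpJ t| ≤ 4 := by
  rcases le_or_gt t (1/4) with h | h
  · rw [bumpJ_eq_zero h]; norm_num
  · unfold bumpJ
    rw [abs_div, abs_of_nonneg (bumpF_nonneg t), abs_of_pos (by linarith : (0:ℝ) < t)]
    rw [div_le_iff₀ (by linarith)]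
    calc bumpF t ≤ 1 := bumpF_le_one t
      _ ≤ 4 * t := by linarith

private lemma bumpJ_mul_self (t : ℝ) : bumpJ t * t = bumpF t := by
  rcases eq_or_ne t 0 with rfl | ht
  · rw [bumpJ_eq_zero (by norm_num), zero_mul, bumpF_eq_zero (by norm_num)]
  · unfold bumpJ; exact div_mul_cancel₀ _ ht

end Bump

section Main


variable {A X : Type*} [NormedRing A] [StarRing A] [CStarRing A] [NormedAlgebra ℂ A]
  [StarModule ℂ A] [PartialOrder A] [StarOrderedRing A] [CompleteSpace A]
  [NormedAddCommGroup X] [NormedSpace ℂ X]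

lemma real_smul_mem_nusa {D : NonUnitalStarSubalgebra ℂ A} {a : A} (h : a ∈ D) (r : ℝ) :
    r • a ∈ D := by
  rw [← Complex.coe_smul]
  exact D.smul_mem _ h

/-- Any non-trivial closed hereditary subalgebra contains a positive norm-one element. -/
lemma exists_pos_norm_one {D : NonUnitalStarSubalgebra ℂ A}
    (hD : NontrivClosedHereditary D) : ∃ a ∈ D, 0 ≤ a ∧ ‖a‖ = 1 := by
  obtain ⟨d, hdD, hd⟩ := hD.2.1
  set p : A := star d * d with hp
  have hsdD : star d ∈ D := star_mem hdD
  have hpD : p ∈ D := D.mul_mem hsdD hdD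
  have hp0 : 0 ≤ p := star_mul_self_nonneg d
  have hpn : ‖p‖ ≠ 0 := by
    rw [hp, CStarRing.norm_star_mul_self]
    exact mul_ne_zero (norm_ne_zero_iff.2 hd) (norm_ne_zero_iff.2 hd)
  refine ⟨‖p‖⁻¹ • p, real_smul_mem_nusa hpD _, ?_, ?_⟩
  · exact smul_nonneg (by positivity) hp0
  · rw [norm_smul, norm_inv, norm_norm, inv_mul_cancel₀ hpn]

/-- The zero element satisfies Kishimoto's condition. -/
lemma kishimoto_zero (M : NormedBimoduleStr A X) : KishimotoBim M 0 := by
  intro D hD ε hε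
  obtain ⟨a, haD, ha0, ha1⟩ := exists_pos_norm_one hD
  refine ⟨a, haD, ha0, ha1, ?_⟩
  have : M.lsmul a (M.rsmul 0 a) = 0 := by
    have := map_zero (M.rsmulCLM a)
    simp only [NormedBimoduleStr.rsmulCLM_apply] at this
    rw [this]
    have := map_zero (M.lsmulCLM a)
    simpa using this
  rw [this, norm_zero]
  exact hε

lemma kishimoto_smul (M : NormedBimoduleStr A X) (c : ℂ) {x : X}
    (hx : KishimotoBim M x) : KishimotoBim M (c • x) := by
  rcases eq_or_ne c 0 with rfl | hc
  · simpa using kishimoto_zero M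
  · intro D hD ε hε
    obtain ⟨a, haD, ha0, ha1, hax⟩ := hx D hD (ε / ‖c‖) (div_pos hε (norm_pos_iff.2 hc))
    refine ⟨a, haD, ha0, ha1, ?_⟩
    have : M.lsmul a (M.rsmul (c • x) a) = c • M.lsmul a (M.rsmul x a) := by
      rw [M.rsmul_smulc, M.lsmul_smulc]
    rw [this, norm_smul]
    calc ‖c‖ * ‖M.lsmul a (M.rsmul x a)‖ < ‖c‖ * (ε / ‖c‖) := by
          exact mul_lt_mul_of_pos_left hax (norm_pos_iff.2 hc)
      _ = ε := by rw [mul_comm]; exact div_mul_cancel₀ ε (norm_ne_zero_iff.2 hc)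

/-- Kishimoto's condition is stable under addition. This is the key lemma; its proof
uses the continuous functional calculus. -/
lemma kishimoto_add (M : NormedBimoduleStr A X) {x y : X}
    (hx : KishimotoBim M x) (hy : KishimotoBim M y) : KishimotoBim M (x + y) := by
  letI : CStarAlgebra A :=
    { ‹NormedRing A›, ‹StarRing A›, ‹CStarRing A›, ‹CompleteSpace A›,
      ‹NormedAlgebra ℂ A›, ‹StarModule ℂ A› with }
  intro D hD ε hε
  obtain ⟨a, haD, ha0, ha1, hax⟩ := hx D hD (ε / 32) (by positivity)
  have hA : Nontrivial A := by
    obtain ⟨d, -, hd⟩ := hD.2.1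
    exact nontrivial_of_ne d 0 hd
  have ha_sa : IsSelfAdjoint a := .of_nonneg ha0
  have ha_spec : ∀ t ∈ spectrum ℝ a, 0 ≤ t := spectrum_nonneg_of_nonneg ha0
  have hf_cont : Continuous bumpF := bumpF_cont
  have hj_cont : Continuous bumpJ := bumpJ_cont
  have hf_contOn : ContinuousOn bumpF (spectrum ℝ a) := hf_cont.continuousOn
  have hj_contOn : ContinuousOn bumpJ (spectrum ℝ a) := hj_cont.continuousOn
  set u : A := cfc bumpJ a with hu_def
  set e : A := cfc bumpF a with he_def
  have he_sa : IsSelfAdjoint e := cfc_predicate bumpF a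
  have hu_norm : ‖u‖ ≤ 4 := norm_cfc_le (by norm_num) (fun t _ => by
    rw [Real.norm_eq_abs]; exact bumpJ_bound t)
  have he_ua : e = u * a := by
    conv_rhs => rw [← cfc_id ℝ a, ← cfc_mul bumpJ id a hj_contOn continuousOn_id]
    exact cfc_congr (fun t _ => (bumpJ_mul_self t).symm)
  have he_au : e = a * u := by
    conv_rhs => rw [← cfc_id ℝ a, ← cfc_mul id bumpJ a continuousOn_id hj_contOn]
    refine cfc_congr (fun t _ => ?_)
    rw [← bumpJ_mul_self t, mul_comm]
    rfl
  -- the element c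
  set c : A := cfc (fun t : ℝ => max (t - 1/2) 0) a with hc_def
  have hc0 : 0 ≤ c := cfc_nonneg (fun t _ => le_max_right _ _)
  have hc_le_a : c ≤ a := by
    conv_rhs => rw [← cfc_id ℝ a]
    exact cfc_mono (fun t ht => by
      simp only [id_eq]
      exact max_le (by linarith) (ha_spec t ht))
  have hcD : c ∈ D := hD.2.2 c a haD hc0 hc_le_a
  have hc_ne : c ≠ 0 := by
    intro h0
    have h1 : (1 : ℝ) ∈ spectrum ℝ a := ha1 ▸ CStarAlgebra.norm_mem_spectrum_of_nonneg ha0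
    have : (1/2 : ℝ) ∈ spectrum ℝ c := by
      rw [hc_def, cfc_map_spectrum (fun t : ℝ => max (t - 1/2) 0) a]
      exact ⟨1, h1, by norm_num⟩
    rw [h0] at this
    rw [spectrum.zero_eq] at this
    norm_num at this
  have hec : e * c = c := by
    rw [he_def, hc_def,
      ← cfc_mul bumpF (fun t : ℝ => max (t - 1/2) 0) a hf_contOn (by fun_prop)]
    refine cfc_congr (fun t _ => ?_)
    rcases le_or_gt t (1/2) with h | h
    · rw [max_eq_right (by linarith), mul_zero]
    · rw [bumpF_eq_one (le_of_lt h), one_mul]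
  have hce : c * e = c := by
    rw [he_def, hc_def,
      ← cfc_mul (fun t : ℝ => max (t - 1/2) 0) bumpF a (by fun_prop) hf_contOn]
    refine cfc_congr (fun t _ => ?_)
    rcases le_or_gt t (1/2) with h | h
    · rw [max_eq_right (by linarith), zero_mul]
    · rw [bumpF_eq_one (le_of_lt h), mul_one]
  -- the hereditary subalgebra D'
  set D' : NonUnitalStarSubalgebra ℂ A :=
    { carrier := {b : A | e * b = b ∧ b * e = b}
      add_mem' := by
        rintro p q ⟨hp1, hp2⟩ ⟨hq1, hq2⟩
        exact ⟨by rw [mul_add, hp1, hq1], by rw [add_mul, hp2, hq2]⟩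
      zero_mem' := by simp
      mul_mem' := by
        rintro p q ⟨hp1, hp2⟩ ⟨hq1, hq2⟩
        exact ⟨by rw [← mul_assoc, hp1], by rw [mul_assoc, hq2]⟩
      smul_mem' := by
        rintro r p ⟨hp1, hp2⟩
        exact ⟨by rw [mul_smul_comm, hp1], by rw [smul_mul_assoc, hp2]⟩
      star_mem' := by
        rintro p ⟨hp1, hp2⟩
        constructor
        · rw [← he_sa.star_eq, ← star_mul, hp2]
        · rw [← he_sa.star_eq, ← star_mul, hp1] } with hD'_def
  have hD'mem : ∀ b : A, b ∈ D' ↔ e * b = b ∧ b * e = b := fun b => Iff.rfl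
  have hD' : NontrivClosedHereditary D' := by
    refine ⟨?_, ⟨c, (hD'mem c).2 ⟨hec, hce⟩, hc_ne⟩, ?_⟩
    · have h1 : IsClosed {b : A | e * b = b} :=
        isClosed_eq (continuous_const.mul continuous_id) continuous_id
      have h2 : IsClosed {b : A | b * e = b} :=
        isClosed_eq (continuous_id.mul continuous_const) continuous_id
      exact h1.inter h2
    · intro b' d hd hb'0 hb'd
      rw [hD'mem] at hd
      set s : A := 1 - e with hs_def
      have hs_sa : IsSelfAdjoint s := (IsSelfAdjoint.one A).sub he_sa
      have hsd : s * d = 0 := by rw [hs_def, sub_mul, one_mul, hd.1, sub_self]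
      have hsds : s * d * s = 0 := by rw [hsd, zero_mul]
      have h1 : 0 ≤ s * b' * s := by
        have := star_left_conjugate_nonneg hb'0 s
        rwa [hs_sa.star_eq] at this
      have h2 : s * b' * s ≤ s * d * s := by
        have := star_left_conjugate_le_conjugate hb'd s
        rwa [hs_sa.star_eq] at this
      have h3 : s * b' * s = 0 := le_antisymm (hsds ▸ h2) h1
      set r : A := CFC.sqrt b' with hr_def
      have hr0 : 0 ≤ r := CFC.sqrt_nonneg b'
      have hr_sa : IsSelfAdjoint r := .of_nonneg hr0
      have hrr : r * r = b' := CFC.sqrt_mul_sqrt_self b' hb'0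
      have hrs : r * s = 0 := by
        rw [← CStarRing.star_mul_self_eq_zero_iff (r * s)]
        rw [star_mul, hr_sa.star_eq, hs_sa.star_eq]
        calc s * r * (r * s) = s * (r * r) * s := by noncomm_ring
          _ = s * b' * s := by rw [hrr]
          _ = 0 := h3
      have hb's : b' * s = 0 := by
        rw [← hrr, mul_assoc, hrs, mul_zero]
      have hb'e : b' * e = b' := by
        have : b' * (1 - e) = 0 := hb's
        rw [mul_sub, mul_one, sub_eq_zero] at this
        exact this.symm
      have hb'_sa : IsSelfAdjoint b' := .of_nonneg hb'0
      have heb' : e * b' = b' := by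
        have := congrArg star hb'e
        rwa [star_mul, hb'_sa.star_eq, he_sa.star_eq] at this
      exact (hD'mem b').2 ⟨heb', hb'e⟩
  -- apply Kishimoto's condition to y on D'
  obtain ⟨b, hbD', hb0, hb1, hby⟩ := hy D' hD' (ε / 2) (by positivity)
  rw [hD'mem] at hbD'
  have hb_sa : IsSelfAdjoint b := .of_nonneg hb0
  -- b ∈ D
  have hb_le_one : b ≤ 1 := by
    have h := IsSelfAdjoint.le_algebraMap_norm_self (a := b) hb_sa
    rwa [hb1, map_one] at h
  have hb_le : b ≤ (4 : ℝ) • a := by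
    have h1 : b = e * b * e := by rw [hbD'.1, hbD'.2]
    have h2 : e * b * e ≤ e * 1 * e := by
      have := star_left_conjugate_le_conjugate hb_le_one e
      rwa [he_sa.star_eq] at this
    have h3 : e * 1 * e = e * e := by rw [mul_one]
    have h4 : e * e ≤ (4 : ℝ) • a := by
      rw [he_def, ← cfc_mul bumpF bumpF a hf_contOn hf_contOn]
      have h5 : cfc (fun t : ℝ => bumpF t * bumpF t) a ≤ cfc (fun t : ℝ => (4 : ℝ) * t) a := by
        refine cfc_mono (fun t ht => ?_) ((hf_cont.mul hf_cont).continuousOn) (by fun_prop)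
        rcases le_or_gt t (1/4) with h | h
        · rw [bumpF_eq_zero h, mul_zero]
          linarith [ha_spec t ht]
        · calc bumpF t * bumpF t ≤ 1 * 1 :=
              mul_le_mul (bumpF_le_one t) (bumpF_le_one t) (bumpF_nonneg t) (by norm_num)
            _ = 1 := by norm_num
            _ ≤ 4 * t := by linarith
      rwa [cfc_const_mul_id (4 : ℝ) a] at h5
    calc b = e * b * e := h1
      _ ≤ e * 1 * e := h2
      _ = e * e := h3
      _ ≤ (4 : ℝ) • a := h4
  have hbD : b ∈ D := hD.2.2 b ((4 : ℝ) • a) (real_smul_mem_nusa haD 4) hb0 hb_le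
  refine ⟨b, hbD, hb0, hb1, ?_⟩
  -- the norm estimate
  have key : M.san b (x + y) = M.san b x + M.san b y := M.san_add b x y
  have hbx : ‖M.san b x‖ < ε / 2 := by
    have h1 : M.san b x = M.san b (M.san e x) := M.san_san hbD'.1 hbD'.2 x
    have h2 : M.san e x = M.lsmul u (M.rsmul (M.san a x) u) := by
      rw [he_ua]
      exact M.san_factor (he_ua ▸ he_au : u * a = a * u) x
    have h3 : ‖M.san e x‖ ≤ 4 * (‖M.san a x‖ * 4) := by
      rw [h2]
      calc ‖M.lsmul u (M.rsmul (M.san a x) u)‖ ≤ ‖u‖ * ‖M.rsmul (M.san a x) u‖ :=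
            M.norm_lsmul_le _ _
        _ ≤ ‖u‖ * (‖M.san a x‖ * ‖u‖) :=
            mul_le_mul_of_nonneg_left (M.norm_rsmul_le _ _) (norm_nonneg u)
        _ ≤ 4 * (‖M.san a x‖ * 4) := by
            have h4 : ‖M.san a x‖ * ‖u‖ ≤ ‖M.san a x‖ * 4 :=
              mul_le_mul_of_nonneg_left hu_norm (norm_nonneg _)
            have h5 : (0:ℝ) ≤ ‖M.san a x‖ * 4 := by positivity
            calc ‖u‖ * (‖M.san a x‖ * ‖u‖) ≤ ‖u‖ * (‖M.san a x‖ * 4) :=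
                  mul_le_mul_of_nonneg_left h4 (norm_nonneg u)
              _ ≤ 4 * (‖M.san a x‖ * 4) := mul_le_mul_of_nonneg_right hu_norm h5
    have h6 : ‖M.san b (M.san e x)‖ ≤ ‖b‖ * ‖M.san e x‖ * ‖b‖ := M.norm_san_le b _
    rw [h1]
    have hsan_ax : ‖M.san a x‖ < ε / 32 := hax
    calc ‖M.san b (M.san e x)‖ ≤ ‖b‖ * ‖M.san e x‖ * ‖b‖ := h6
      _ = ‖M.san e x‖ := by rw [hb1, one_mul, mul_one]
      _ ≤ 4 * (‖M.san a x‖ * 4) := h3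
      _ < 4 * (ε / 32 * 4) := by
          have : ‖M.san a x‖ * 4 < ε / 32 * 4 := by linarith
          linarith
      _ = ε / 2 := by ring
  have hby' : ‖M.san b y‖ < ε / 2 := hby
  show ‖M.san b (x + y)‖ < ε
  calc ‖M.san b (x + y)‖ = ‖M.san b x + M.san b y‖ := by rw [key]
    _ ≤ ‖M.san b x‖ + ‖M.san b y‖ := norm_add_le _ _
    _ < ε / 2 + ε / 2 := add_lt_add hbx hby'
    _ = ε := by ring

/-- The set of elements satisfying Kishimoto's condition is closed. -/
lemma kishimoto_closed (M : NormedBimoduleStr A X) {x : X}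
    (hx : x ∈ closure {z : X | KishimotoBim M z}) : KishimotoBim M x := by
  intro D hD ε hε
  obtain ⟨z, hz, hxz⟩ := Metric.mem_closure_iff.mp hx (ε / 2) (by positivity)
  obtain ⟨a, haD, ha0, ha1, haz⟩ := hz D hD (ε / 2) (by positivity)
  refine ⟨a, haD, ha0, ha1, ?_⟩
  have h1 : M.san a x = M.san a z + M.san a (x - z) := by
    rw [← M.san_add, add_sub_cancel]
  show ‖M.san a x‖ < ε
  calc ‖M.san a x‖ = ‖M.san a z + M.san a (x - z)‖ := by rw [h1]
    _ ≤ ‖M.san a z‖ + ‖M.san a (x - z)‖ := norm_add_le _ _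
    _ ≤ ‖M.san a z‖ + ‖a‖ * ‖x - z‖ * ‖a‖ := by
        have := M.norm_san_le a (x - z)
        linarith
    _ = ‖M.san a z‖ + ‖x - z‖ := by rw [ha1, one_mul, mul_one]
    _ < ε / 2 + ε / 2 := by
        have hx2 : ‖x - z‖ < ε / 2 := by
          rw [← dist_eq_norm]
          exact hxz
        exact add_lt_add haz hx2
    _ = ε := by ring

end Main

/-- every normed `A`-bimodule contains a largest aperiodic `A`-subbimodule,
namely the closed linear span of all aperiodic `A`-subbimodules. -/
theorem exists_largest_aperiodic_subbimodule
    {A X : Type*} [NormedRing A] [StarRing A] [CStarRing A] [NormedAlgebra ℂ A]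
    [StarModule ℂ A] [PartialOrder A] [StarOrderedRing A] [CompleteSpace A]
    [NormedAddCommGroup X] [NormedSpace ℂ X] (M : NormedBimoduleStr A X) :
    ∃ S : Submodule ℂ X, IsSubBimoduleX M S ∧ (∀ x ∈ S, KishimotoBim M x) ∧
      (∀ T : Submodule ℂ X, IsSubBimoduleX M T → (∀ x ∈ T, KishimotoBim M x) → T ≤ S) ∧
      S = (sSup {T : Submodule ℂ X |
        IsSubBimoduleX M T ∧ ∀ x ∈ T, KishimotoBim M x}).topologicalClosure := by
  classical
  set 𝒯 : Set (Submodule ℂ X) :=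
    {T : Submodule ℂ X | IsSubBimoduleX M T ∧ ∀ x ∈ T, KishimotoBim M x} with h𝒯
  set S₀ : Submodule ℂ X := sSup 𝒯 with hS₀
  set S : Submodule ℂ X := S₀.topologicalClosure with hS
  -- the Kishimoto set as a submodule
  set K : Submodule ℂ X :=
    { carrier := {z : X | KishimotoBim M z}
      add_mem' := fun hx hy => kishimoto_add M hx hy
      zero_mem' := kishimoto_zero M
      smul_mem' := fun c x hx => kishimoto_smul M c hx } with hK
  have hS₀K : S₀ ≤ K := by
    rw [hS₀]
    exact sSup_le (fun T hT => hT.2)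
  have hSK : ∀ x ∈ S, KishimotoBim M x := by
    intro x hxS
    have hx : x ∈ closure (S₀ : Set X) := hxS
    have : x ∈ closure {z : X | KishimotoBim M z} :=
      closure_mono hS₀K hx
    exact kishimoto_closed M this
  have hSsub : IsSubBimoduleX M S := by
    intro a x hxS
    have hx : x ∈ closure (S₀ : Set X) := hxS
    constructor
    · have : M.lsmulCLM a x ∈ closure (S₀ : Set X) := by
        refine map_mem_closure (M.lsmulCLM a).continuous hx ?_
        intro z hz
        -- z ∈ S₀ → lsmul a z ∈ S₀
        have : S₀ ≤ Submodule.comap (M.lsmulCLM a : X →ₗ[ℂ] X) S₀ := by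
          rw [hS₀]
          refine sSup_le (fun T hT => ?_)
          intro w hw
          exact le_sSup hT ((hT.1 a w hw).1)
        exact this hz
      exact (by simpa using this : M.lsmul a x ∈ closure (S₀ : Set X))
    · have : M.rsmulCLM a x ∈ closure (S₀ : Set X) := by
        refine map_mem_closure (M.rsmulCLM a).continuous hx ?_
        intro z hz
        have : S₀ ≤ Submodule.comap (M.rsmulCLM a : X →ₗ[ℂ] X) S₀ := by
          rw [hS₀]
          refine sSup_le (fun T hT => ?_)
          intro w hw
          exact le_sSup hT ((hT.1 a w hw).2)
        exact this hz
      exact (by simpa using this : M.rsmul x a ∈ closure (S₀ : Set X))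
  refine ⟨S, hSsub, hSK, ?_, rfl⟩
  intro T hT1 hT2
  calc T ≤ S₀ := le_sSup ⟨hT1, hT2⟩
    _ ≤ S := Submodule.le_topologicalClosure S₀
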